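/- Let u : ℝ^m → [0,1] be upper semi-continuous with all cut-sets [u]_α compact for α ∈ (0,1], and let α ∈ (0,1) with [u]_α nonempty and such that there exists some β > α with [u]_β nonempty (or more generally α < λ_u where λ_u = sup{β : [u]_β ≠ ∅}). Then H([u]_β, closure({u>α})) → 0 as β → α from above, where H is the Hausdorff metric. -/

import Mathlib

open Filter Metric EMetric Topology Set

theorem stmt12 {m : ℕ} (u : EuclideanSpace ℝ (Fin m) → ℝ)
    (hu : ∀ x, u x ∈ Icc (0:ℝ) 1) (husc : UpperSemicontinuous u)
    (hcomp : ∀ α ∈ Ioc (0:ℝ) 1, IsCompact {x | α ≤ u x})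
    (α : ℝ) (hα : α ∈ Ioo (0:ℝ) 1)
    (hne : {x | α ≤ u x}.Nonempty)
    (hbeta : ∃ β > α, {x | β ≤ u x}.Nonempty) :
    Tendsto (fun β => hausdorffEdist {x | β ≤ u x} (closure {x | α < u x}))
      (𝓝[>] α) (𝓝 0) := by
  obtain ⟨β₁, hβ₁α, hβ₁ne⟩ := hbeta
  set C := closure {x | α < u x} with hC
  have hCsub : C ⊆ {x | α ≤ u x} :=
    closure_minimal (fun x (hx : α < u x) => hx.le)
      (hcomp α ⟨hα.1, le_of_lt hα.2⟩).isClosed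
  have hCcomp : IsCompact C :=
    (hcomp α ⟨hα.1, le_of_lt hα.2⟩).of_isClosed_subset isClosed_closure hCsub
  -- monotonicity of cut sets
  have hmono : ∀ {β β' : ℝ}, β ≤ β' → {x | β' ≤ u x} ⊆ {x | β ≤ u x} :=
    fun h x hx => le_trans h hx
  rw [ENNReal.tendsto_nhds_zero]
  intro ε hε
  obtain ⟨δ, hδ, hδε⟩ : ∃ δ : ℝ, 0 < δ ∧ ENNReal.ofReal δ ≤ ε := by
    rcases eq_or_ne ε ⊤ with h | h
    · exact ⟨1, one_pos, by simp [h]⟩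
    · exact ⟨ε.toReal, ENNReal.toReal_pos hε.ne' h,
        by rw [ENNReal.ofReal_toReal h]⟩
  -- cover C by thickenings
  have hcover : C ⊆ ⋃ β : {b : ℝ // α < b}, thickening δ {x | (β : ℝ) ≤ u x} := by
    intro x hx
    have h0 : Metric.infEDist x {x | α < u x} = 0 := by
      rw [← EMetric.mem_closure_iff_infEdist_zero]; exact hx
    have : Metric.infEDist x {x | α < u x} < ENNReal.ofReal δ := by
      rw [h0]; exact ENNReal.ofReal_pos.2 hδ
    rw [EMetric.infEdist_lt_iff] at this
    obtain ⟨y, hy, hxy⟩ := this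
    refine mem_iUnion.2 ⟨⟨u y, hy⟩, ?_⟩
    rw [Metric.mem_thickening_iff_infEdist_lt]
    exact lt_of_le_of_lt (EMetric.infEdist_le_edist_of_mem (le_refl (u y))) hxy
  obtain ⟨t, ht⟩ := hCcomp.elim_finite_subcover _
    (fun β : {b : ℝ // α < b} => Metric.isOpen_thickening) hcover
  -- single β₀
  set t' : Finset {b : ℝ // α < b} := insert ⟨β₁, hβ₁α⟩ t with ht'
  have ht'ne : t'.Nonempty := ⟨⟨β₁, hβ₁α⟩, Finset.mem_insert_self _ _⟩
  set β₀ : {b : ℝ // α < b} := t'.min' ht'ne with hβ₀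
  have hβ₀α : α < (β₀ : ℝ) := β₀.2
  have hβ₀le : ∀ β ∈ t', (β₀ : ℝ) ≤ (β : ℝ) := fun β hβ => t'.min'_le β hβ
  have hCU : C ⊆ thickening δ {x | (β₀ : ℝ) ≤ u x} := by
    intro x hx
    obtain ⟨β, hβt, hxβ⟩ := mem_iUnion₂.1 (ht hx)
    exact Metric.thickening_subset_of_subset δ
      (hmono (hβ₀le β (Finset.mem_insert_of_mem hβt))) hxβ
  -- conclude
  filter_upwards [Ioo_mem_nhdsGT_of_mem (Set.mem_Ico.2 ⟨le_refl α, hβ₀α⟩)]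
    with β hβ
  refine le_trans (EMetric.hausdorffEdist_le_of_infEdist ?_ ?_) hδε
  · intro x hx
    have : x ∈ C := subset_closure (lt_of_lt_of_le hβ.1 hx)
    rw [EMetric.infEdist_zero_of_mem this]
    exact zero_le
  · intro x hx
    have hx' : x ∈ thickening δ {x | β ≤ u x} :=
      Metric.thickening_subset_of_subset δ (hmono (le_of_lt hβ.2)) (hCU hx)
    exact le_of_lt (Metric.mem_thickening_iff_infEdist_lt.1 hx')
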